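/- Let a = 1/2 − 1/(2√5), b = 1 − 1/(30 a), c = 0 (Hixon's sixth-order prefactored coefficients). For every real z the denominator a e^{iz} + (1 − a) is nonzero, and the forward numerical wavenumber K_F(z) = −i · (b e^{iz} − (2b−1) − (1−b) e^{−iz}) / (a e^{iz} + (1−a)) satisfies Re K_F(z) = (28 sin z + sin 2z)/(18 + 12 cos z). -/

import Mathlib

open Complex

/-- for Hixon's sixth-order prefactored coefficients
`a = 1/2 - 1/(2√5)`, `b = 1 - 1/(30a)`, `c = 0`, the denominator `a e^{iz} + (1-a)` never
vanishes and the real part of the forward numerical wavenumber equals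
`(28 sin z + sin 2z)/(18 + 12 cos z)`. -/
theorem hixon_sixth_order_real_part
    (a b c : ℝ)
    (ha : a = 1/2 - 1/(2 * Real.sqrt 5))
    (hb : b = 1 - 1/(30 * a))
    (hc : c = 0) :
    ∀ z : ℝ,
      ((a : ℂ) * Complex.exp (Complex.I * (z : ℂ)) + (1 - (a : ℂ)) ≠ 0) ∧
      (-Complex.I *
          ((b : ℂ) * Complex.exp (Complex.I * (z : ℂ)) - (2 * (b : ℂ) - 1)
            - (1 - (b : ℂ)) * Complex.exp (-(Complex.I * (z : ℂ)))) /
          ((a : ℂ) * Complex.exp (Complex.I * (z : ℂ)) + (1 - (a : ℂ)))).re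
        = (28 * Real.sin z + Real.sin (2*z)) / (18 + 12 * Real.cos z) := by
  have hs5 : (0:ℝ) < Real.sqrt 5 := Real.sqrt_pos.mpr (by norm_num)
  have hs5sq : Real.sqrt 5 * Real.sqrt 5 = 5 := Real.mul_self_sqrt (by norm_num)
  have ha0 : a ≠ 0 := by
    rw [ha]
    intro h
    have : Real.sqrt 5 = 1 := by field_simp at h; linarith
    nlinarith
  have key1 : a * (1 - a) = 1/5 := by
    rw [ha]; field_simp; nlinarith [hs5sq]
  have key2 : a * b = a - 1/30 := by
    rw [hb]; field_simp
  intro z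
  have hpyth : Real.sin z ^ 2 + Real.cos z ^ 2 = 1 := Real.sin_sq_add_cos_sq z
  have hcz : -1 ≤ Real.cos z := Real.neg_one_le_cos z
  have hmul : Complex.I * (z : ℂ) = (z : ℂ) * Complex.I := mul_comm _ _
  have hnorm : Complex.normSq ((a : ℂ) * Complex.exp (Complex.I * (z : ℂ)) + (1 - (a : ℂ)))
      = (3 + 2 * Real.cos z) / 5 := by
    rw [hmul, Complex.exp_mul_I]
    simp [Complex.normSq_apply, Complex.cos_ofReal_re, Complex.sin_ofReal_re]
    linear_combination a^2*hpyth + (2*Real.cos z - 2)*key1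
  have hpos : (0:ℝ) < (3 + 2 * Real.cos z) / 5 := by linarith
  have hden : ((a : ℂ) * Complex.exp (Complex.I * (z : ℂ)) + (1 - (a : ℂ))) ≠ 0 := by
    intro h
    rw [h] at hnorm
    simp at hnorm
    linarith
  refine ⟨hden, ?_⟩
  rw [Complex.div_re, hnorm]
  rw [hmul, show -((z:ℂ)*Complex.I) = ((-z:ℝ):ℂ)*Complex.I by push_cast; ring,
    Complex.exp_mul_I, Complex.exp_mul_I, Real.sin_two_mul]
  simp [Complex.cos_ofReal_re, Complex.sin_ofReal_re, Complex.cos_ofReal_im, Complex.sin_ofReal_im,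
    Real.cos_neg, Real.sin_neg]
  rw [← add_div, div_eq_div_iff (by positivity) (by nlinarith)]
  linear_combination (-(Real.sin z)*(2*Real.cos z-2)*(18+12*Real.cos z))*key2
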